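/- Let A be a g×g matrix over the ℓ-adic integers ℤ_ℓ such that (A - 1)^r ∈ ℓ^m · M_g(ℤ_ℓ) for positive integers m, r. If λ is an eigenvalue of A that is a root of unity and r < m(ℓ - 1), then λ = 1. -/

import Mathlib

set_option maxHeartbeats 1000000
set_option synthInstance.maxHeartbeats 1000000
open Polynomial

lemma aux_eval_charpoly {F : Type*} [Field F] {g : ℕ} (M : Matrix (Fin g) (Fin g) F) (x : F) :
    (Matrix.charpoly M).eval x = (x • (1 : Matrix (Fin g) (Fin g) F) - M).det := by
  rw [Matrix.charpoly, ← Polynomial.coe_evalRingHom, RingHom.map_det]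
  congr 1
  ext i j
  by_cases h : i = j
  · subst h
    simp [Matrix.charmatrix_apply_eq, Matrix.sub_apply, Matrix.one_apply]
  · simp [Matrix.charmatrix_apply_ne _ _ _ h, Matrix.sub_apply, Matrix.one_apply, h]

lemma aux_exists_eigenvector {F : Type*} [Field F] {g : ℕ} (M : Matrix (Fin g) (Fin g) F) (x : F)
    (h : (Matrix.charpoly M).eval x = 0) : ∃ v, v ≠ 0 ∧ M.mulVec v = x • v := by
  rw [aux_eval_charpoly] at h
  obtain ⟨v, hv, hv0⟩ := (Matrix.exists_mulVec_eq_zero_iff).mpr h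
  refine ⟨v, hv, ?_⟩
  rw [Matrix.sub_mulVec, Matrix.smul_mulVec, Matrix.one_mulVec, sub_eq_zero] at hv0
  exact hv0.symm

lemma aux_charpolyB_root {R F : Type*} [CommRing R] [Field F] (φ : R →+* F) {g : ℕ}
    (A B : Matrix (Fin g) (Fin g) R) {r : ℕ} (c : R)
    (hAB : (A - 1) ^ r = c • B) (x : F) (hx : ((Matrix.charpoly A).map φ).eval x = 0)
    (hc : φ c ≠ 0) :
    ((Matrix.charpoly B).map φ).eval ((x - 1) ^ r / φ c) = 0 := by
  set M := A.map φ with hM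
  have hchar : (Matrix.charpoly M).eval x = 0 := by
    rw [hM, Matrix.charpoly_map]; exact hx
  obtain ⟨v, hv0, hv⟩ := aux_exists_eigenvector M x hchar
  have hNpow : ∀ k : ℕ, ((M - 1) ^ k).mulVec v = (x - 1) ^ k • v := by
    intro k
    induction k with
    | zero => simp
    | succ k ih =>
      have hNv : (M - 1).mulVec v = (x - 1) • v := by
        rw [Matrix.sub_mulVec, hv, Matrix.one_mulVec, sub_smul, one_smul]
      rw [pow_succ, ← Matrix.mulVec_mulVec, hNv, Matrix.mulVec_smul, ih, pow_succ, mul_smul,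
        smul_comm]
  have hmapped : (M - 1) ^ r = φ c • B.map φ := by
    have : ((A - 1) ^ r).map φ = ((c • B)).map φ := by rw [hAB]
    have h1 : ((A - 1) ^ r).map φ = (M - 1) ^ r := by
      simp only [hM, ← RingHom.mapMatrix_apply, ← map_pow, ← map_sub, ← map_one φ.mapMatrix]
    have h2 : (c • B).map φ = φ c • B.map φ := by
      ext i j
      simp [Matrix.map_apply, Matrix.smul_apply, smul_eq_mul]
    rw [← h1, this, h2]
  have hBv : (B.map φ).mulVec v = ((x - 1) ^ r / φ c) • v := by
    have := hNpow r
    rw [hmapped, Matrix.smul_mulVec] at this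
    have := congrArg (fun w => (φ c)⁻¹ • w) this
    simp only [inv_smul_smul₀ hc] at this
    rw [this, smul_smul, div_eq_inv_mul]
  have hdet : ((((x - 1) ^ r / φ c) • (1 : Matrix (Fin g) (Fin g) F)) - B.map φ).det = 0 := by
    rw [← Matrix.exists_mulVec_eq_zero_iff]
    refine ⟨v, hv0, ?_⟩
    rw [Matrix.sub_mulVec, Matrix.smul_mulVec, Matrix.one_mulVec, hBv, sub_self]
  rw [← Matrix.charpoly_map, aux_eval_charpoly]
  exact hdet

lemma aux_eisenstein {ℓ : ℕ} [Fact ℓ.Prime] (k : ℕ) :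
    ((cyclotomic (ℓ ^ (k + 1)) ℤ_[ℓ]).comp (X + C 1)).IsEisensteinAt
      (Ideal.span {(ℓ : ℤ_[ℓ])}) := by
  have hEZ := cyclotomic_prime_pow_comp_X_add_one_isEisensteinAt (p := ℓ) k
  have hmapeq : ((cyclotomic (ℓ ^ (k + 1)) ℤ).comp (X + 1)).map (Int.castRingHom ℤ_[ℓ])
      = (cyclotomic (ℓ ^ (k + 1)) ℤ_[ℓ]).comp (X + C 1) := by
    rw [Polynomial.map_comp, map_cyclotomic]
    congr 1
    simp
  have hmonic : ((cyclotomic (ℓ ^ (k + 1)) ℤ).comp (X + 1)).Monic := by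
    have : ((X : ℤ[X]) + 1) = X + C 1 := by simp
    rw [this]
    exact (cyclotomic.monic _ ℤ).comp_X_add_C 1
  constructor
  · -- leading coeff not in span
    rw [← hmapeq, (hmonic.map (Int.castRingHom ℤ_[ℓ])).leadingCoeff]
    rw [Ideal.mem_span_singleton]
    intro hdvd
    exact (PadicInt.irreducible_p (p := ℓ)).not_isUnit (isUnit_of_dvd_one hdvd)
  · -- lower coeffs in span
    intro n hn
    rw [← hmapeq, (hmonic).natDegree_map (Int.castRingHom ℤ_[ℓ])] at hn
    have hmem := hEZ.mem (n := n) hn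
    rw [← hmapeq, coeff_map]
    obtain ⟨t, ht⟩ := Ideal.mem_span_singleton.mp hmem
    refine Ideal.mem_span_singleton.mpr ⟨(t : ℤ_[ℓ]), ?_⟩
    rw [ht]; simp
  · -- coeff 0 not in span^2
    rw [← hmapeq, coeff_map]
    have h0 : ((cyclotomic (ℓ ^ (k + 1)) ℤ).comp (X + 1)).coeff 0 = ℓ := by
      rw [coeff_zero_eq_eval_zero, eval_comp]
      simp [eval_one_cyclotomic_prime_pow]
    rw [h0, Ideal.span_singleton_pow, Ideal.mem_span_singleton]
    intro hdvd
    obtain ⟨t, ht'⟩ := hdvd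
    have ht : (ℓ : ℤ_[ℓ]) = (ℓ : ℤ_[ℓ]) ^ 2 * t := by
      rw [← ht']; simp
    have hne : (ℓ : ℤ_[ℓ]) ≠ 0 := (PadicInt.prime_p (p := ℓ)).ne_zero
    have : (1 : ℤ_[ℓ]) = (ℓ : ℤ_[ℓ]) * t := by
      have := ht
      rw [pow_two, mul_assoc] at this
      exact mul_left_cancel₀ hne (by rw [mul_one]; exact this)
    exact (PadicInt.prime_p (p := ℓ)).not_unit (IsUnit.of_mul_eq_one _ this.symm)

lemma aux_cyclo_irred_int {ℓ : ℕ} [Fact ℓ.Prime] (k : ℕ) :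
    Irreducible (cyclotomic (ℓ ^ (k + 1)) ℤ_[ℓ]) := by
  have hp : Fact ℓ.Prime := inferInstance
  have hdeg : 0 < (cyclotomic (ℓ ^ (k + 1)) ℤ_[ℓ]).natDegree := by
    rw [natDegree_cyclotomic]
    exact Nat.totient_pos.mpr (pow_pos hp.out.pos _)
  have hirr_comp : Irreducible ((cyclotomic (ℓ ^ (k + 1)) ℤ_[ℓ]).comp (X + C 1)) := by
    refine (aux_eisenstein k).irreducible ?_ ?_ ?_
    · exact (Ideal.span_singleton_prime (PadicInt.prime_p (p := ℓ)).ne_zero).mpr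
        (PadicInt.prime_p (p := ℓ))
    · exact ((cyclotomic.monic _ ℤ_[ℓ]).comp_X_add_C 1).isPrimitive
    · rwa [natDegree_comp, natDegree_X_add_C, mul_one]
  have : (cyclotomic (ℓ ^ (k + 1)) ℤ_[ℓ]).comp (X + C 1)
      = algEquivAevalXAddC (1 : ℤ_[ℓ]) (cyclotomic (ℓ ^ (k + 1)) ℤ_[ℓ]) := by
    simp [algEquivAevalXAddC_apply, comp_eq_aeval]
  rw [this] at hirr_comp
  exact (MulEquiv.irreducible_iff (algEquivAevalXAddC (1 : ℤ_[ℓ])).toMulEquiv).mp hirr_comp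

lemma aux_cyclo_irred {ℓ : ℕ} [Fact ℓ.Prime] (k : ℕ) :
    Irreducible (cyclotomic (ℓ ^ (k + 1)) ℚ_[ℓ]) := by
  have h := aux_cyclo_irred_int (ℓ := ℓ) k
  have := ((cyclotomic.monic (ℓ ^ (k + 1)) ℤ_[ℓ]).irreducible_iff_irreducible_map_fraction_map
    (K := ℚ_[ℓ])).mp h
  rwa [map_cyclotomic] at this

open IntermediateField

/-- Minkowski–Serre: if `(A - 1)^r ∈ ℓ^m M_g(ℤ_ℓ)` and `λ` is an eigenvalue of `A`
which is a root of unity, with `r < m(ℓ - 1)`, then `λ = 1`. -/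
theorem eigenvalue_one_of_lt {ℓ : ℕ} [Fact ℓ.Prime] (g m r : ℕ) (hm : 0 < m) (hr : 0 < r)
    (A : Matrix (Fin g) (Fin g) ℤ_[ℓ])
    (hA : ∃ B : Matrix (Fin g) (Fin g) ℤ_[ℓ], (A - 1) ^ r = (ℓ : ℤ_[ℓ]) ^ m • B)
    (lam : AlgebraicClosure ℚ_[ℓ])
    (heig : Polynomial.aeval lam (Matrix.charpoly (A.map (algebraMap ℤ_[ℓ] ℚ_[ℓ]))) = 0)
    (hroot : ∃ n : ℕ, 0 < n ∧ lam ^ n = 1)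
    (hlt : r < m * (ℓ - 1)) :
    lam = 1 := by
  by_contra hne
  set φ : ℤ_[ℓ] →+* AlgebraicClosure ℚ_[ℓ] := algebraMap ℤ_[ℓ] (AlgebraicClosure ℚ_[ℓ]) with hφ
  have hφcomp : ∀ x : ℤ_[ℓ],
      φ x = algebraMap ℚ_[ℓ] (AlgebraicClosure ℚ_[ℓ]) (algebraMap ℤ_[ℓ] ℚ_[ℓ] x) :=
    fun x => IsScalarTower.algebraMap_apply ℤ_[ℓ] ℚ_[ℓ] (AlgebraicClosure ℚ_[ℓ]) x
  have hφinj : Function.Injective φ := by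
    rw [hφ]
    intro a b hab
    apply IsFractionRing.injective ℤ_[ℓ] ℚ_[ℓ]
    apply (algebraMap ℚ_[ℓ] (AlgebraicClosure ℚ_[ℓ])).injective
    rwa [← IsScalarTower.algebraMap_apply, ← IsScalarTower.algebraMap_apply]
  haveI : NoZeroSMulDivisors ℤ_[ℓ] (AlgebraicClosure ℚ_[ℓ]) :=
    ⟨fun {c x} h => by
      rw [Algebra.smul_def, mul_eq_zero] at h
      exact h.imp_left (fun h' => hφinj (by rw [map_zero]; exact h'))⟩
  obtain ⟨B, hB⟩ := hA
  obtain ⟨n, hnpos, hlamn⟩ := hroot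
  -- basic facts about lam
  have hfin : IsOfFinOrder lam := (isOfFinOrder_iff_pow_eq_one).mpr ⟨n, hnpos, hlamn⟩
  set n₀ := orderOf lam with hn₀def
  have hn₀pos : 0 < n₀ := hfin.orderOf_pos
  have hprim : IsPrimitiveRoot lam n₀ := IsPrimitiveRoot.orderOf lam
  have hn₀1 : n₀ ≠ 1 := fun h => hne (orderOf_eq_one_iff.mp h)
  have hlamint : IsIntegral ℤ_[ℓ] lam := by
    refine ⟨Polynomial.X ^ n₀ - Polynomial.C 1, Polynomial.monic_X_pow_sub_C 1 hn₀pos.ne', ?_⟩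
    simp [hn₀def, pow_orderOf_eq_one lam]
  have hlamQ : IsIntegral ℚ_[ℓ] lam := hlamint.tower_top
  -- the eigenvalue equation over F
  have hx : ((Matrix.charpoly A).map φ).eval lam = 0 := by
    have h1 : Matrix.charpoly (A.map (algebraMap ℤ_[ℓ] ℚ_[ℓ]))
        = (Matrix.charpoly A).map (algebraMap ℤ_[ℓ] ℚ_[ℓ]) := Matrix.charpoly_map A _
    rw [Polynomial.aeval_def, ← Polynomial.eval_map, h1, Polynomial.map_map] at heig
    exact heig
  have hℓF : φ ((ℓ : ℤ_[ℓ]) ^ m) ≠ 0 := by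
    have h0 : ((ℓ : ℤ_[ℓ]) ^ m) ≠ 0 := pow_ne_zero _ (PadicInt.prime_p (p := ℓ)).ne_zero
    intro h
    refine h0 ?_
    apply IsFractionRing.injective ℤ_[ℓ] ℚ_[ℓ]
    apply (algebraMap ℚ_[ℓ] (AlgebraicClosure ℚ_[ℓ])).injective
    rw [← hφcomp, h, map_zero, map_zero]
  set μ : AlgebraicClosure ℚ_[ℓ] := (lam - 1) ^ r / φ ((ℓ : ℤ_[ℓ]) ^ m) with hμdef
  have hμroot : ((Matrix.charpoly B).map φ).eval μ = 0 :=
    aux_charpolyB_root φ A B _ hB lam hx hℓF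
  have hμint : IsIntegral ℤ_[ℓ] μ :=
    ⟨Matrix.charpoly B, Matrix.charpoly_monic B, by
      rw [Polynomial.eval₂_eq_eval_map]; exact hμroot⟩
  -- minimal polynomials
  set P := minpoly ℤ_[ℓ] lam with hPdef
  set p := minpoly ℚ_[ℓ] lam with hpdef
  have hPp : p = P.map (algebraMap ℤ_[ℓ] ℚ_[ℓ]) :=
    minpoly.isIntegrallyClosed_eq_field_fractions' ℚ_[ℓ] hlamint
  have hcycroot : Polynomial.aeval lam (Polynomial.cyclotomic n₀ ℤ_[ℓ]) = 0 := by
    rw [Polynomial.aeval_def, ← Polynomial.eval_map, Polynomial.map_cyclotomic]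
    exact hprim.isRoot_cyclotomic hn₀pos
  have hPdvd : P ∣ Polynomial.cyclotomic n₀ ℤ_[ℓ] :=
    minpoly.isIntegrallyClosed_dvd hlamint hcycroot
  obtain ⟨Q, hPQ⟩ := hPdvd
  -- the adjoined field
  have hβ : IsIntegral ℚ_[ℓ] (lam - 1) := hlamQ.sub isIntegral_one
  haveI : IsScalarTower ℤ_[ℓ] ℚ_[ℓ]⟮lam - 1⟯ (AlgebraicClosure ℚ_[ℓ]) :=
    IsScalarTower.of_algebraMap_eq (fun x => by
      rw [IsScalarTower.algebraMap_apply ℤ_[ℓ] ℚ_[ℓ] (AlgebraicClosure ℚ_[ℓ]),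
        IsScalarTower.algebraMap_apply ℚ_[ℓ] ℚ_[ℓ]⟮lam - 1⟯ (AlgebraicClosure ℚ_[ℓ]),
        IsScalarTower.algebraMap_apply ℤ_[ℓ] ℚ_[ℓ] ℚ_[ℓ]⟮lam - 1⟯])
  haveI : FiniteDimensional ℚ_[ℓ] ℚ_[ℓ]⟮lam - 1⟯ := IntermediateField.adjoin.finiteDimensional hβ
  set K := ℚ_[ℓ]⟮lam - 1⟯ with hKdef
  set pb : PowerBasis ℚ_[ℓ] K := IntermediateField.adjoin.powerBasis hβ with hpbdef
  set D := Module.finrank ℚ_[ℓ] K with hDdef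
  have hDpos : 0 < D := Module.finrank_pos
  -- the element μK
  have hcK : algebraMap ℚ_[ℓ] K ((ℓ : ℚ_[ℓ]) ^ m) ≠ 0 := by
    intro h
    have h2 := (algebraMap ℚ_[ℓ] K).injective (h.trans (map_zero _).symm)
    exact pow_ne_zero m (Nat.cast_ne_zero.mpr (Fact.out : ℓ.Prime).ne_zero) h2
  set μK : K := pb.gen ^ r / algebraMap ℚ_[ℓ] K ((ℓ : ℚ_[ℓ]) ^ m) with hμKdef
  have hgen : algebraMap K (AlgebraicClosure ℚ_[ℓ]) pb.gen = lam - 1 := by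
    rw [hpbdef, IntermediateField.adjoin.powerBasis_gen]
    exact IntermediateField.AdjoinSimple.algebraMap_gen ℚ_[ℓ] (lam - 1)
  have hden : algebraMap K (AlgebraicClosure ℚ_[ℓ]) (algebraMap ℚ_[ℓ] K ((ℓ : ℚ_[ℓ]) ^ m))
      = φ ((ℓ : ℤ_[ℓ]) ^ m) := by
    rw [← IsScalarTower.algebraMap_apply ℚ_[ℓ] K (AlgebraicClosure ℚ_[ℓ]), hφcomp]
    push_cast
    norm_num
  have hμK : algebraMap K (AlgebraicClosure ℚ_[ℓ]) μK = μ := by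
    rw [hμKdef, map_div₀, map_pow, hgen, hμdef, hden]
  have hgeneq : pb.gen ^ r = algebraMap ℚ_[ℓ] K ((ℓ : ℚ_[ℓ]) ^ m) * μK := by
    rw [hμKdef, mul_div_cancel₀ _ hcK]
  have hμKint : IsIntegral ℤ_[ℓ] μK := by
    rw [← isIntegral_algebraMap_iff (algebraMap K (AlgebraicClosure ℚ_[ℓ])).injective, hμK]
    exact hμint
  have hNint : IsIntegral ℤ_[ℓ] (Algebra.norm ℚ_[ℓ] μK) :=
    Algebra.isIntegral_norm ℚ_[ℓ] hμKint
  obtain ⟨y, hy⟩ := IsIntegrallyClosed.isIntegral_iff.mp hNint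
  -- norm computation
  have hNr : (Algebra.norm ℚ_[ℓ] pb.gen) ^ r = ((ℓ : ℚ_[ℓ]) ^ m) ^ D * Algebra.norm ℚ_[ℓ] μK := by
    rw [← map_pow, hgeneq, map_mul, Algebra.norm_algebraMap]
  have hminβ : minpoly ℚ_[ℓ] pb.gen = p.comp (Polynomial.X + Polynomial.C 1) := by
    rw [hpbdef, IntermediateField.adjoin.powerBasis_gen, IntermediateField.minpoly_gen]
    have : lam - 1 = lam - algebraMap ℚ_[ℓ] (AlgebraicClosure ℚ_[ℓ]) 1 := by rw [map_one]
    rw [this, minpoly.sub_algebraMap]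
  have hNgen : Algebra.norm ℚ_[ℓ] pb.gen = (-1) ^ pb.dim * p.eval 1 := by
    rw [Algebra.PowerBasis.norm_gen_eq_coeff_zero_minpoly pb, hminβ, Polynomial.coeff_zero_eq_eval_zero,
      Polynomial.eval_comp]
    simp
  have hdim : pb.dim = p.natDegree := by
    rw [hpbdef, IntermediateField.adjoin.powerBasis_dim]
    have : lam - 1 = lam - algebraMap ℚ_[ℓ] (AlgebraicClosure ℚ_[ℓ]) 1 := by rw [map_one]
    rw [this, minpoly.sub_algebraMap, Polynomial.natDegree_comp, Polynomial.natDegree_X_add_C,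
      mul_one]
  have hDdim : D = p.natDegree := by
    rw [hDdef, pb.finrank, hdim]
  -- the padic integer equation
  set a := P.eval 1 with hadef
  have hpa : p.eval 1 = algebraMap ℤ_[ℓ] ℚ_[ℓ] a := by
    rw [hPp, Polynomial.eval_one_map]
  have hZeq : ((-1 : ℤ_[ℓ]) ^ pb.dim) ^ r * a ^ r = (ℓ : ℤ_[ℓ]) ^ (m * D) * y := by
    apply IsFractionRing.injective ℤ_[ℓ] ℚ_[ℓ]
    rw [map_mul, map_mul, map_pow, map_pow, map_pow, map_pow, hy]
    have := hNr
    rw [hNgen, hpa, mul_pow, ← pow_mul (ℓ : ℚ_[ℓ])] at this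
    rw [map_neg, map_one, map_natCast]
    exact this
  have hdvd2 : (ℓ : ℤ_[ℓ]) ^ (m * D) ∣ a ^ r := by
    refine ⟨((-1 : ℤ_[ℓ]) ^ pb.dim) ^ r * y, ?_⟩
    have h1 : (((-1 : ℤ_[ℓ]) ^ pb.dim) ^ r) * (((-1 : ℤ_[ℓ]) ^ pb.dim) ^ r) = 1 := by
      rw [← mul_pow, ← pow_add]
      have he : Even (pb.dim + pb.dim) := ⟨pb.dim, rfl⟩
      rw [he.neg_one_pow, one_pow]
    calc a ^ r = (((-1 : ℤ_[ℓ]) ^ pb.dim) ^ r * ((-1 : ℤ_[ℓ]) ^ pb.dim) ^ r) * a ^ r := by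
          rw [h1, one_mul]
      _ = ((-1 : ℤ_[ℓ]) ^ pb.dim) ^ r * (((-1 : ℤ_[ℓ]) ^ pb.dim) ^ r * a ^ r) := by ring
      _ = ((-1 : ℤ_[ℓ]) ^ pb.dim) ^ r * ((ℓ : ℤ_[ℓ]) ^ (m * D) * y) := by rw [hZeq]
      _ = (ℓ : ℤ_[ℓ]) ^ (m * D) * (((-1 : ℤ_[ℓ]) ^ pb.dim) ^ r * y) := by ring
  have hℓprime := PadicInt.prime_p (p := ℓ)
  -- case analysis
  by_cases hcase : ∃ k : ℕ, n₀ = ℓ ^ (k + 1)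
  · obtain ⟨k, hk⟩ := hcase
    have hirr : Irreducible (Polynomial.cyclotomic n₀ ℚ_[ℓ]) := by
      rw [hk]; exact aux_cyclo_irred k
    have haev : Polynomial.aeval lam (Polynomial.cyclotomic n₀ ℚ_[ℓ]) = 0 := by
      rw [Polynomial.aeval_def, ← Polynomial.eval_map, Polynomial.map_cyclotomic]
      exact hprim.isRoot_cyclotomic hn₀pos
    have hpcyc : p = Polynomial.cyclotomic n₀ ℚ_[ℓ] :=
      (minpoly.eq_of_irreducible_of_monic hirr haev (Polynomial.cyclotomic.monic _ _)).symm
    have hPcyc : P = Polynomial.cyclotomic n₀ ℤ_[ℓ] := by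
      apply Polynomial.map_injective _ (IsFractionRing.injective ℤ_[ℓ] ℚ_[ℓ])
      rw [← hPp, hpcyc, Polynomial.map_cyclotomic]
    have ha : a = (ℓ : ℤ_[ℓ]) := by
      rw [hadef, hPcyc, hk, Polynomial.eval_one_cyclotomic_prime_pow]
    have hDval : D = (ℓ ^ (k + 1)).totient := by
      rw [hDdim, hpcyc, Polynomial.natDegree_cyclotomic, hk]
    have hmD : r < m * D := by
      rw [hDval, Nat.totient_prime_pow (Fact.out : ℓ.Prime) (Nat.succ_pos k)]
      calc r < m * (ℓ - 1) := hlt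
        _ ≤ m * (ℓ ^ k * (ℓ - 1)) := by
          apply Nat.mul_le_mul_left
          exact Nat.le_mul_of_pos_left _ (pow_pos (Fact.out : ℓ.Prime).pos k)
        _ = m * (ℓ ^ (k + 1 - 1) * (ℓ - 1)) := by norm_num
    -- ℓ^(m*D) ∣ ℓ^r gives a contradiction
    rw [ha] at hdvd2
    have h3 : (ℓ : ℤ_[ℓ]) ^ (m * D) ∣ (ℓ : ℤ_[ℓ]) ^ r := hdvd2
    have h4 : (ℓ : ℤ_[ℓ]) ^ (m * D) = (ℓ : ℤ_[ℓ]) ^ r * (ℓ : ℤ_[ℓ]) ^ (m * D - r) := by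
      rw [← pow_add]
      congr 1
      omega
    obtain ⟨t, ht⟩ := h3
    have h5 : (ℓ : ℤ_[ℓ]) ^ r * 1 = (ℓ : ℤ_[ℓ]) ^ r * ((ℓ : ℤ_[ℓ]) ^ (m * D - r) * t) := by
      rw [mul_one, ← mul_assoc, ← h4, ← ht]
    have h6 := mul_left_cancel₀ (pow_ne_zero r hℓprime.ne_zero) h5
    have h7 : IsUnit ((ℓ : ℤ_[ℓ]) ^ (m * D - r)) := IsUnit.of_mul_eq_one _ h6.symm
    have h8 : IsUnit (ℓ : ℤ_[ℓ]) := by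
      have hmDr : m * D - r ≠ 0 := by omega
      exact (isUnit_pow_iff hmDr).mp h7
    exact hℓprime.not_unit h8
  · -- a is a unit
    have haQ : a * Q.eval 1 = (Polynomial.cyclotomic n₀ ℤ_[ℓ]).eval 1 := by
      rw [hPQ, Polynomial.eval_mul]
    have hunit : IsUnit a := by
      by_cases hpp : ∃ q : ℕ, q.Prime ∧ ∃ j : ℕ, n₀ = q ^ (j + 1)
      · obtain ⟨q, hq, j, hj⟩ := hpp
        haveI : Fact q.Prime := ⟨hq⟩
        have hval : (Polynomial.cyclotomic n₀ ℤ_[ℓ]).eval 1 = (q : ℤ_[ℓ]) := by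
          rw [hj, Polynomial.eval_one_cyclotomic_prime_pow]
        have hqℓ : q ≠ ℓ := by
          intro h
          exact hcase ⟨j, by rw [hj, h]⟩
        have hqunit : IsUnit (q : ℤ_[ℓ]) := by
          rw [PadicInt.isUnit_iff]
          have h1 : ‖(q : ℤ_[ℓ])‖ ≤ 1 := PadicInt.norm_le_one _
          have h2 : ¬ ‖(q : ℤ_[ℓ])‖ < 1 := by
            have : ((q : ℤ) : ℤ_[ℓ]) = (q : ℤ_[ℓ]) := by push_cast; ring
            rw [← this, PadicInt.norm_int_lt_one_iff_dvd]
            intro hdvd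
            rw [Int.natCast_dvd_natCast] at hdvd
            exact hqℓ ((Nat.prime_dvd_prime_iff_eq (Fact.out : ℓ.Prime) hq).mp hdvd).symm
          linarith
        exact isUnit_of_dvd_unit ⟨Q.eval 1, (haQ.trans hval).symm⟩ hqunit
      · have hval : (Polynomial.cyclotomic n₀ ℤ_[ℓ]).eval 1 = 1 := by
          apply Polynomial.eval_one_cyclotomic_not_prime_pow
          intro q hq k hk
          rcases k with _ | k'
          · exact hn₀1 (by simpa using hk.symm)
          · exact hpp ⟨q, hq, k', hk.symm⟩
        exact IsUnit.of_mul_eq_one _ (haQ.trans hval)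
    have har : IsUnit (a ^ r) := hunit.pow r
    have hℓdvd : (ℓ : ℤ_[ℓ]) ∣ a ^ r :=
      dvd_trans (dvd_pow_self _ (by positivity : 0 < m * D).ne') hdvd2
    exact hℓprime.not_unit (isUnit_of_dvd_unit hℓdvd har)
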